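/- Let p be an odd prime, k = p(p−1), and let 1 ≤ t ≤ u with u ≥ p² + 2. Let c_1, …, c_u and d_1, …, d_t be integers not divisible by p. Then the pair of congruences c_1 x_1^k + ⋯ + c_u x_u^k ≡ 0 (mod p²) and d_1 x_1 + ⋯ + d_t x_t ≡ 0 (mod p) has a solution in integers x_1, …, x_u which is non-singular, i.e., there exist indices i, j such that p does not divide c_i x_i^{k−1} d_j − c_j x_j^{k−1} d_i (with the convention d_j = 0 for j > t). -/

import Mathlib

lemma closed_univ {m : ℕ} [NeZero m] (A : Finset (ZMod m)) (h0 : A.Nonempty)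
    (u : ZMod m) (hu : IsUnit u) (hA : ∀ a ∈ A, a + u ∈ A) : A = Finset.univ := by
  obtain ⟨a, ha⟩ := h0
  apply Finset.eq_univ_of_forall
  intro y
  have key : ∀ n : ℕ, a + (n : ZMod m) * u ∈ A := by
    intro n
    induction n with
    | zero => simpa using ha
    | succ n ih =>
      have h1 : ((n + 1 : ℕ) : ZMod m) = (n : ZMod m) + 1 := by push_cast; ring
      have h2 : a + ((n : ZMod m) + 1) * u = (a + (n : ZMod m) * u) + u := by ring
      rw [h1, h2]
      exact hA _ ih
  have hz : ((( (y - a) * (hu.unit⁻¹ : (ZMod m)ˣ) ).val : ℕ) : ZMod m)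
      = (y - a) * (hu.unit⁻¹ : (ZMod m)ˣ) := ZMod.natCast_rightInverse _
  have hk := key ((y - a) * ((hu.unit⁻¹ : (ZMod m)ˣ) : ZMod m)).val
  rw [hz] at hk
  have huu : ((hu.unit⁻¹ : (ZMod m)ˣ) : ZMod m) * u = 1 := by
    have := hu.unit.inv_mul
    simpa [IsUnit.unit_spec] using this
  have hy : y = a + (y - a) * (((hu.unit⁻¹ : (ZMod m)ˣ) : ZMod m)) * u := by
    rw [mul_assoc, huu]; ring
  rw [hy]
  rw [mul_assoc] at hk ⊢
  exact hk



lemma grow {m : ℕ} [NeZero m] {ι : Type*} [DecidableEq ι] (c : ι → ZMod m) :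
    ∀ (T : Finset ι), (∀ i ∈ T, IsUnit (c i)) →
      min m (T.card + 1) ≤ (T.powerset.image (fun S => ∑ i ∈ S, c i)).card := by
  intro T
  induction T using Finset.induction_on with
  | empty =>
    intro _
    simp only [Finset.powerset_empty, Finset.image_singleton, Finset.sum_empty,
      Finset.card_singleton, Finset.card_empty]
    have : 1 ≤ m := Nat.one_le_iff_ne_zero.mpr (NeZero.ne m)
    omega
  | @insert a T ha ih =>
    intro hT
    have hTu : ∀ i ∈ T, IsUnit (c i) := fun i hi => hT i (Finset.mem_insert_of_mem hi)
    have hau : IsUnit (c a) := hT a (Finset.mem_insert_self a T)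
    set F : Finset (ZMod m) := T.powerset.image (fun S => ∑ i ∈ S, c i) with hF
    have himg : (insert a T).powerset.image (fun S => ∑ i ∈ S, c i)
        = F ∪ F.image (fun s => s + c a) := by
      rw [Finset.powerset_insert, Finset.image_union, hF, Finset.image_image, Finset.image_image]
      congr 1
      apply Finset.image_congr
      intro S hS
      simp only [Finset.mem_coe, Finset.mem_powerset] at hS
      have haS : a ∉ S := fun h => ha (hS h)
      simp [Finset.sum_insert haS, add_comm]
    rw [himg]
    have hF0 : F.Nonempty := ⟨0, by
      rw [hF]
      exact Finset.mem_image.mpr ⟨∅, by simp⟩⟩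
    by_cases hsub : F.image (fun s => s + c a) ⊆ F
    · have hcl : ∀ s ∈ F, s + c a ∈ F := fun s hs =>
        hsub (Finset.mem_image_of_mem _ hs)
      have : F = Finset.univ := closed_univ F hF0 (c a) hau hcl
      rw [this]
      have hle : m ≤ (Finset.univ ∪ (Finset.univ : Finset (ZMod m)).image (fun s => s + c a)).card := by
        calc m = (Finset.univ : Finset (ZMod m)).card := by simp [ZMod.card]
        _ ≤ _ := Finset.card_le_card Finset.subset_union_left
      exact le_trans (min_le_left _ _) hle
    · obtain ⟨y, hy1, hy2⟩ := Finset.not_subset.mp hsub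
      have hins : insert y F ⊆ F ∪ F.image (fun s => s + c a) := by
        intro z hz
        rcases Finset.mem_insert.mp hz with rfl | hz
        · exact Finset.mem_union_right _ hy1
        · exact Finset.mem_union_left _ hz
      have h1 : F.card + 1 ≤ (F ∪ F.image (fun s => s + c a)).card := by
        have := Finset.card_le_card hins
        rwa [Finset.card_insert_of_notMem hy2] at this
      have h2 := ih hTu
      rw [Finset.card_insert_of_notMem ha]
      omega

lemma sum_cover {m : ℕ} [NeZero m] {ι : Type*} [DecidableEq ι] (c : ι → ZMod m)
    (T : Finset ι) (hT : ∀ i ∈ T, IsUnit (c i)) (hcard : m ≤ T.card + 1) (r : ZMod m) :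
    ∃ S ⊆ T, (∑ i ∈ S, c i) = r := by
  have h := grow c T hT
  rw [min_eq_left hcard] at h
  have hcard2 : (T.powerset.image (fun S => ∑ i ∈ S, c i)).card
      = Fintype.card (ZMod m) := le_antisymm (Finset.card_le_univ _) (by rwa [ZMod.card])
  have huniv := Finset.eq_univ_of_card _ hcard2
  have : r ∈ T.powerset.image (fun S => ∑ i ∈ S, c i) := huniv ▸ Finset.mem_univ r
  obtain ⟨S, hS, hSr⟩ := Finset.mem_image.mp this
  exact ⟨S, Finset.mem_powerset.mp hS, hSr⟩


lemma hp2_zero (p : ℕ) : ((p : ZMod (p ^ 2))) ^ 2 = 0 := by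
  have h := ZMod.natCast_self (p ^ 2)
  push_cast at h
  exact h

lemma p_pow_k_zero {p : ℕ} {k : ℕ} (hk2 : 2 ≤ k) :
    ((p : ZMod (p ^ 2))) ^ k = 0 := by
  calc ((p : ZMod (p ^ 2))) ^ k
      = ((p : ZMod (p^2)))^2 * ((p : ZMod (p^2)))^(k-2) := by
        rw [← pow_add]; congr 1; omega
    _ = 0 := by rw [hp2_zero, zero_mul]

lemma isUnit_int_cast {p : ℕ} (hp : p.Prime) (x : ℤ) (hx : ¬ (p : ℤ) ∣ x) :
    IsUnit ((x : ZMod (p ^ 2))) := by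
  have hpz : Prime (p : ℤ) := Int.prime_iff_natAbs_prime.mpr (by simpa)
  have h1 : IsCoprime (p : ℤ) x := hpz.coprime_iff_not_dvd.mpr hx
  have hco : IsCoprime (x : ℤ) ((p : ℤ) ^ 2) := (IsCoprime.pow_left h1).symm
  obtain ⟨a, b, hab⟩ := hco
  have h2 : ((a : ZMod (p^2)) * (x : ZMod (p^2)) = 1) := by
    have h3 := congrArg (fun z : ℤ => (z : ZMod (p^2))) hab
    push_cast at h3
    rw [hp2_zero p] at h3
    simpa using h3
  exact IsUnit.of_mul_eq_one _ (mul_comm (a : ZMod (p^2)) _ ▸ h2)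

lemma unit_pow_k {p : ℕ} (hp : p.Prime) (x : ℤ) (hx : ¬ (p : ℤ) ∣ x) :
    ((x : ZMod (p ^ 2))) ^ (p * (p - 1)) = 1 := by
  haveI : Fact p.Prime := ⟨hp⟩
  haveI : NeZero (p ^ 2) := ⟨pow_ne_zero 2 hp.ne_zero⟩
  have hu := isUnit_int_cast hp x hx
  have hcard : Fintype.card (ZMod (p ^ 2))ˣ = p * (p - 1) := by
    rw [ZMod.card_units_eq_totient, Nat.totient_prime_pow hp (by norm_num)]
    simp
  have h1 := pow_card_eq_one (x := hu.unit)
  rw [hcard] at h1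
  have h2 := congrArg (Units.val) h1
  simpa [IsUnit.unit_spec] using h2

lemma ksum_zero {p u k : ℕ} (hp : p.Prime) (hk : k = p * (p-1)) (hk2 : 2 ≤ k)
    (c x : Fin u → ℤ) (U : Finset (Fin u))
    (h1 : ∀ i ∈ U, ¬ (p:ℤ) ∣ x i) (h2 : ∀ i ∉ U, (p:ℤ) ∣ x i)
    (hsum : ∑ i ∈ U, ((c i : ZMod (p^2))) = 0) :
    (p:ℤ)^2 ∣ ∑ i, c i * x i ^ k := by
  have hdvd : ((p^2 : ℕ) : ℤ) ∣ ∑ i, c i * x i ^ k := by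
    rw [← ZMod.intCast_zmod_eq_zero_iff_dvd]
    push_cast
    have key : ∀ i : Fin u, ((c i : ZMod (p^2)) * ((x i : ZMod (p^2)))^k)
        = if i ∈ U then (c i : ZMod (p^2)) else 0 := by
      intro i
      by_cases hi : i ∈ U
      · rw [if_pos hi, hk, unit_pow_k hp _ (h1 i hi), mul_one]
      · rw [if_neg hi]
        obtain ⟨y, hy⟩ := h2 i hi
        have hz : ((x i : ZMod (p^2)))^k = 0 := by
          rw [hy]; push_cast; rw [mul_pow, p_pow_k_zero hk2, zero_mul]
        rw [hz, mul_zero]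
    rw [Finset.sum_congr rfl (fun i _ => key i), Finset.sum_ite_mem, Finset.univ_inter, hsum]
  have : ((p^2 : ℕ) : ℤ) = (p:ℤ)^2 := by push_cast; ring
  rwa [this] at hdvd

lemma nonsing {p : ℕ} (hp : p.Prime) {u t k : ℕ} (hk1 : k - 1 ≠ 0)
    (c x : Fin u → ℤ) (d : Fin t → ℤ)
    (i j : Fin u) (hjt : (j : ℕ) < t)
    (hci : ¬(p:ℤ) ∣ c i) (hxi : ¬(p:ℤ) ∣ x i) (hdj : ¬(p:ℤ) ∣ d ⟨(j:ℕ), hjt⟩)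
    (hxj : (p:ℤ) ∣ x j) :
    ¬ (p:ℤ) ∣ (c i * x i ^ (k-1) * (if h : (j:ℕ) < t then d ⟨(j:ℕ),h⟩ else 0) -
               c j * x j ^ (k-1) * (if h : (i:ℕ) < t then d ⟨(i:ℕ),h⟩ else 0)) := by
  rw [dif_pos hjt]
  intro hdvd
  set D : ℤ := (if h : (i:ℕ) < t then d ⟨(i:ℕ),h⟩ else 0) with hD
  have hB : (p:ℤ) ∣ c j * x j ^ (k-1) * D :=
    ((dvd_pow hxj hk1).mul_left (c j)).mul_right D
  have hA : (p:ℤ) ∣ c i * x i ^ (k-1) * d ⟨(j:ℕ), hjt⟩ := by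
    have heq : c i * x i ^ (k-1) * d ⟨(j:ℕ), hjt⟩
        = (c i * x i ^ (k-1) * d ⟨(j:ℕ), hjt⟩ - c j * x j ^ (k-1) * D)
          + c j * x j ^ (k-1) * D := by ring
    rw [heq]
    exact dvd_add hdvd hB
  rcases Int.Prime.dvd_mul' hp hA with h | h
  · rcases Int.Prime.dvd_mul' hp h with h' | h'
    · exact hci h'
    · exact hxi (Int.Prime.dvd_pow' hp h')
  · exact hdj h

set_option maxHeartbeats 1000000

theorem stmt_14 (p : ℕ) (hp : p.Prime) (hodd : Odd p) (k : ℕ) (hk : k = p * (p - 1))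
    (t u : ℕ) (ht : 1 ≤ t) (htu : t ≤ u) (hu : p ^ 2 + 2 ≤ u)
    (c : Fin u → ℤ) (d : Fin t → ℤ)
    (hc : ∀ i, ¬ (p : ℤ) ∣ c i) (hd : ∀ j, ¬ (p : ℤ) ∣ d j) :
    ∃ x : Fin u → ℤ,
      ((p : ℤ) ^ 2 ∣ ∑ i, c i * x i ^ k) ∧
      ((p : ℤ) ∣ ∑ j : Fin t, d j * x (Fin.castLE htu j)) ∧
      ∃ i j : Fin u, ¬ (p : ℤ) ∣
        (c i * x i ^ (k - 1) * (if h : (j : ℕ) < t then d ⟨j, h⟩ else 0) -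
         c j * x j ^ (k - 1) * (if h : (i : ℕ) < t then d ⟨i, h⟩ else 0)) := by
  haveI : Fact p.Prime := ⟨hp⟩
  haveI : NeZero (p ^ 2) := ⟨pow_ne_zero 2 hp.ne_zero⟩
  have hp2le := hp.two_le
  have hpodd : p % 2 = 1 := Nat.odd_iff.mp hodd
  have hp3 : 3 ≤ p := by omega
  have hk6 : 6 ≤ k := by
    have := Nat.mul_le_mul hp3 (show 2 ≤ p - 1 by omega)
    omega
  have hk2 : 2 ≤ k := by omega
  have hk1 : k - 1 ≠ 0 := by omega
  have hp2ge : 9 ≤ p ^ 2 := by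
    calc 9 = 3 ^ 2 := by norm_num
    _ ≤ p ^ 2 := Nat.pow_le_pow_left hp3 2
  have hu11 : 11 ≤ u := by omega
  have hpz : Prime (p : ℤ) := Int.prime_iff_natAbs_prime.mpr (by simpa)
  have not1 : ¬ (p:ℤ) ∣ 1 := hpz.not_dvd_one
  have not2 : ¬ (p:ℤ) ∣ 2 := by
    intro h
    have := Int.le_of_dvd (by norm_num) h
    have : (3:ℤ) ≤ p := by exact_mod_cast Nat.cast_le.mpr hp3
    omega
  set T : Finset (Fin u) := Finset.univ.filter (fun i => 3 ≤ (i:ℕ)) with hT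
  have hTcard : p ^ 2 ≤ T.card + 1 := by
    have hinj : u - 3 ≤ T.card := by
      have := Finset.card_le_card_of_injOn
        (f := fun a : Fin (u-3) => (⟨(a:ℕ)+3, by omega⟩ : Fin u))
        (s := Finset.univ) (t := T)
        (by intro a _; simp [hT])
        (by intro a _ b _ hab; have : (a:ℕ)+3 = (b:ℕ)+3 := congrArg Fin.val hab
            exact Fin.ext (by omega))
      simpa using this
    omega
  have hunits : ∀ i ∈ T, IsUnit ((c i : ZMod (p^2))) := fun i _ => isUnit_int_cast hp _ (hc i)
  by_cases ht2 : t ≤ 2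
  · -- Case I
    set i0 : Fin u := ⟨0, by omega⟩ with hi0
    set i2 : Fin u := ⟨2, by omega⟩ with hi2
    obtain ⟨S, hST, hSsum⟩ := sum_cover (fun i => ((c i : ZMod (p^2)))) T hunits hTcard
      (-(c i2 : ZMod (p^2)))
    have hi2S : i2 ∉ S := by
      intro h
      have := hST h
      simp [hT, hi2] at this
    have hi0S : i0 ∉ S := by
      intro h
      have := hST h
      simp [hT, hi0] at this
    set U : Finset (Fin u) := insert i2 S with hU
    set x : Fin u → ℤ := fun i => if i ∈ U then (1:ℤ) else (p:ℤ) with hx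
    have hxmem : ∀ i ∈ U, x i = 1 := fun i hi => by simp [hx, hi]
    have hxnmem : ∀ i ∉ U, x i = (p:ℤ) := fun i hi => by simp [hx, hi]
    have hi0U : i0 ∉ U := by
      simp only [hU, Finset.mem_insert]
      push_neg
      exact ⟨by simp [hi0, hi2, Fin.ext_iff], hi0S⟩
    refine ⟨x, ?_, ?_, ?_⟩
    · refine ksum_zero hp hk hk2 c x U ?_ ?_ ?_
      · intro i hi; rw [hxmem i hi]; exact not1
      · intro i hi; rw [hxnmem i hi]
      · rw [hU, Finset.sum_insert hi2S, hSsum]; ring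
    · apply Finset.dvd_sum
      intro j _
      have hjU : Fin.castLE htu j ∉ U := by
        simp only [hU, Finset.mem_insert]
        push_neg
        constructor
        · intro h
          have : (j:ℕ) = 2 := by
            have := congrArg Fin.val h
            simpa [hi2] using this
          omega
        · intro h
          have := hST h
          simp only [hT, Finset.mem_filter] at this
          have h3 : 3 ≤ ((Fin.castLE htu j : Fin u) : ℕ) := this.2
          simp at h3
          omega
      rw [hxnmem _ hjU]
      exact dvd_mul_left _ _
    · refine ⟨i2, i0, nonsing hp hk1 c x d i2 i0 (by simp [hi0]; omega) (hc i2) ?_ (hd _) ?_⟩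
      · rw [hxmem i2 (Finset.mem_insert_self _ _)]; exact not1
      · rw [hxnmem i0 hi0U]
  · -- Case II
    push_neg at ht2
    set i0 : Fin u := ⟨0, by omega⟩ with hi0
    set i1 : Fin u := ⟨1, by omega⟩ with hi1
    set i2 : Fin u := ⟨2, by omega⟩ with hi2
    set j0 : Fin t := ⟨0, by omega⟩ with hj0d
    set j2 : Fin t := ⟨2, by omega⟩ with hj2d
    obtain ⟨S, hST, hSsum⟩ := sum_cover (fun i => ((c i : ZMod (p^2)))) T hunits hTcard
      (-(c i0 : ZMod (p^2)) - (c i2 : ZMod (p^2)))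
    have hmemS : ∀ i ∈ S, 3 ≤ (i : ℕ) := by
      intro i hi
      have := hST hi
      simpa [hT] using this
    have hi0S : i0 ∉ S := fun h => by have := hmemS _ h; simp [hi0] at this
    have hi1S : i1 ∉ S := fun h => by have := hmemS _ h; simp [hi1] at this
    have hi2S : i2 ∉ S := fun h => by have := hmemS _ h; simp [hi2] at this
    have hi02 : i0 ≠ i2 := by simp [hi0, hi2, Fin.ext_iff]
    have hi12 : i1 ≠ i2 := by simp [hi1, hi2, Fin.ext_iff]
    have hi10 : i1 ≠ i0 := by simp [hi1, hi0, Fin.ext_iff]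
    obtain ⟨A, hA⟩ : ∃ A : ZMod p, A = ∑ j ∈ Finset.univ.filter
        (fun j : Fin t => Fin.castLE htu j ∈ S), ((d j : ZMod p)) := ⟨_, rfl⟩
    obtain ⟨d0, hd0d⟩ : ∃ z : ZMod p, z = ((d j0 : ZMod p)) := ⟨_, rfl⟩
    obtain ⟨d2, hd2d⟩ : ∃ z : ZMod p, z = ((d j2 : ZMod p)) := ⟨_, rfl⟩
    have hd0 : d0 ≠ 0 := fun h => hd j0 ((ZMod.intCast_zmod_eq_zero_iff_dvd _ p).mp (hd0d ▸ h))
    obtain ⟨e2, he2⟩ : ∃ z : ℤ, z = if d2 * 1 + A ≠ 0 then 1 else 2 := ⟨_, rfl⟩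
    have hd2' : d2 ≠ 0 := fun hh => hd j2 ((ZMod.intCast_zmod_eq_zero_iff_dvd _ p).mp (hd2d ▸ hh))
    have he2A : d2 * ((e2 : ZMod p)) + A ≠ 0 := by
      by_cases h : d2 * 1 + A ≠ 0
      · rw [he2, if_pos h]
        push_cast
        exact h
      · rw [he2, if_neg h]
        push_cast
        have h0 : d2 * 1 + A = 0 := not_not.mp h
        intro hcon
        apply hd2'
        have hkk : d2 * 2 + A = (d2 * 1 + A) + d2 := by ring
        rw [hkk, h0, zero_add] at hcon
        exact hcon
    have he2nd : ¬ (p:ℤ) ∣ e2 := by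
      rw [he2]
      split
      · exact not1
      · exact not2
    obtain ⟨w, hwdef⟩ : ∃ z : ZMod p, z = -(d2 * ((e2 : ZMod p)) + A) / d0 := ⟨_, rfl⟩
    have hw : w ≠ 0 := hwdef ▸ div_ne_zero (neg_ne_zero.mpr he2A) hd0
    obtain ⟨x0, hx0def⟩ : ∃ z : ℤ, z = (w.val : ℤ) := ⟨_, rfl⟩
    have hx0cast : ((x0 : ZMod p)) = w := by
      rw [hx0def]
      push_cast
      exact ZMod.natCast_rightInverse w
    have hx0nd : ¬ (p:ℤ) ∣ x0 := fun h =>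
      hw (hx0cast ▸ (ZMod.intCast_zmod_eq_zero_iff_dvd x0 p).mpr h)
    obtain ⟨U, hU⟩ : ∃ U : Finset (Fin u), U = insert i0 (insert i2 S) := ⟨_, rfl⟩
    have hi0ins : i0 ∉ insert i2 S := by
      simp only [Finset.mem_insert]
      push_neg
      exact ⟨hi02, hi0S⟩
    obtain ⟨x, hx⟩ : ∃ x : Fin u → ℤ, x = fun i =>
      if i = i0 then x0 else if i = i2 then e2 else if i ∈ S then 1 else (p:ℤ) := ⟨_, rfl⟩
    have hxi0 : x i0 = x0 := by simp [hx]
    have hxi2 : x i2 = e2 := by simp [hx, hi02.symm]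
    have hxS : ∀ i ∈ S, x i = 1 := by
      intro i hi
      have h3 := hmemS i hi
      have hne0 : i ≠ i0 := fun h => by rw [h] at h3; simp [hi0] at h3
      have hne2 : i ≠ i2 := fun h => by rw [h] at h3; simp [hi2] at h3
      simp [hx, hne0, hne2, hi]
    have hxout : ∀ i ∉ U, x i = (p:ℤ) := by
      intro i hi
      simp only [hU, Finset.mem_insert] at hi
      push_neg at hi
      simp [hx, hi.1, hi.2.1, hi.2.2]
    have hi1U : i1 ∉ U := by
      simp only [hU, Finset.mem_insert]
      push_neg
      exact ⟨hi10, hi12, hi1S⟩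
    refine ⟨x, ?_, ?_, ?_⟩
    · refine ksum_zero hp hk hk2 c x U ?_ ?_ ?_
      · intro i hi
        simp only [hU, Finset.mem_insert] at hi
        rcases hi with rfl | rfl | hi
        · rw [hxi0]; exact hx0nd
        · rw [hxi2]; exact he2nd
        · rw [hxS i hi]; exact not1
      · intro i hi; rw [hxout i hi]
      · rw [hU, Finset.sum_insert hi0ins, Finset.sum_insert hi2S, hSsum]; ring
    · have hc0 : Fin.castLE htu j0 = i0 := by
        rw [hi0]; apply Fin.ext; simp [hj0d]
      have hc2 : Fin.castLE htu j2 = i2 := by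
        rw [hi2]; apply Fin.ext; simp [hj2d]
      have hj02 : j0 ≠ j2 := by simp [hj0d, hj2d, Fin.ext_iff]
      have key : ∀ j : Fin t, ((d j : ZMod p)) * ((x (Fin.castLE htu j) : ZMod p)) =
          (if j = j0 then d0 * w else 0) + (if j = j2 then d2 * ((e2 : ZMod p)) else 0)
          + (if Fin.castLE htu j ∈ S then ((d j : ZMod p)) else 0) := by
        intro j
        by_cases hjj0 : j = j0
        · subst hjj0
          rw [hc0, hxi0, if_pos rfl, if_neg hj02, if_neg hi0S, hx0def]
          push_cast
          rw [ZMod.natCast_rightInverse w, hd0d]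
          ring
        · by_cases hjj2 : j = j2
          · subst hjj2
            rw [hc2, hxi2, if_pos rfl, if_neg (Ne.symm hj02), if_neg hi2S, hd2d]
            ring
          · have hne0 : Fin.castLE htu j ≠ i0 := by
              intro h
              apply hjj0
              apply Fin.ext
              have := congrArg Fin.val h
              simp [hi0] at this
              simp [hj0d, this]
            have hne2 : Fin.castLE htu j ≠ i2 := by
              intro h
              apply hjj2
              apply Fin.ext
              have := congrArg Fin.val h
              simp [hi2] at this
              simp [hj2d, this]
            by_cases hjS : Fin.castLE htu j ∈ S
            · rw [if_neg hjj0, if_neg hjj2, if_pos hjS]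
              have : x (Fin.castLE htu j) = 1 := by simp [hx, hne0, hne2, hjS]
              rw [this]
              push_cast
              ring
            · rw [if_neg hjj0, if_neg hjj2, if_neg hjS]
              have : x (Fin.castLE htu j) = (p:ℤ) := by simp [hx, hne0, hne2, hjS]
              rw [this]
              push_cast
              simp [ZMod.natCast_self]
      have goal0 : ((∑ j : Fin t, d j * x (Fin.castLE htu j) : ℤ) : ZMod p) = 0 := by
        push_cast
        rw [Finset.sum_congr rfl (fun j _ => key j), Finset.sum_add_distrib,
          Finset.sum_add_distrib, Finset.sum_ite_eq' Finset.univ j0 (fun _ => d0 * w),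
          Finset.sum_ite_eq' Finset.univ j2 (fun _ => d2 * ((e2 : ZMod p))),
          ← Finset.sum_filter, ← hA]
        simp only [Finset.mem_univ, if_true]
        have hdw : d0 * w = -(d2 * ((e2 : ZMod p)) + A) := by
          rw [hwdef]
          field_simp
        rw [hdw]
        ring
      exact (ZMod.intCast_zmod_eq_zero_iff_dvd _ p).mp goal0
    · refine ⟨i2, i1, nonsing hp hk1 c x d i2 i1 (by simp [hi1]; omega) (hc i2) ?_ (hd _) ?_⟩
      · rw [hxi2]; exact he2nd
      · rw [hxout i1 hi1U]
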